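/- arXiv:0909.0891 — 2 statements merged into one kernel-verified Lean document; each statement's English description precedes it below -/
import Mathlib

section
/- The relation ≤ on HNT, defined by τ ≤ σ if every vertex of the Harder-Narasimhan polygon of τ lies under the Harder-Narasimhan polygon of σ, is reflexive and transitive: for all τ, σ, υ ∈ HNT one has τ ≤ τ, and if τ ≤ σ and σ ≤ υ then τ ≤ υ. -/
open Polynomial

/-- `f ∈ ℚ[λ]` is a numerical polynomial if it takes integer values at all integers. -/
def IsNumericalPoly (f : ℚ[X]) : Prop := ∀ n : ℤ, ∃ k : ℤ, f.eval (n : ℚ) = (k : ℚ)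

/-- The eventual order on `ℚ[λ]`: `f ≤ g` iff `f(m) ≤ g(m)` for all sufficiently
large integers `m`. -/
def PolyLE (f g : ℚ[X]) : Prop := ∃ N : ℤ, ∀ m : ℤ, N ≤ m → f.eval (m : ℚ) ≤ g.eval (m : ℚ)

/-- The strict version of the eventual order on `ℚ[λ]`. -/
def PolyLT (f g : ℚ[X]) : Prop := PolyLE f g ∧ f ≠ g

/-- For a nonzero polynomial `f` of degree `d`, `rOf f = d! ·(leading coefficient of f)`;
and `rOf 0 = 0` (the leading coefficient of `0` is `0`, so no case split is needed). -/
def rOf (f : ℚ[X]) : ℚ := (Nat.factorial f.natDegree : ℚ) * f.leadingCoeff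

/-- A Harder–Narasimhan type of length `p ≥ 1` is here encoded as a function
`f : ℕ → ℚ[X]` with `f 0 = 0`, whose relevant values are `f 1, …, f p`: these are
numerical polynomials with `0 = f 0 < f 1 < ⋯ < f p`, all of the same degree, with
`0 = r(f 0) < r(f 1) < ⋯ < r(f p)`, satisfying the cross-multiplied form of the strict
decrease of the slopes of the successive differences:
`(r(f (i+1)) − r(f i))·(f i − f (i−1)) > (r(f i) − r(f (i−1)))·(f (i+1) − f i)`. -/
structure IsHNT (p : ℕ) (f : ℕ → ℚ[X]) : Prop where
  one_le : 1 ≤ p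
  zero : f 0 = 0
  numerical : ∀ i, 1 ≤ i → i ≤ p → IsNumericalPoly (f i)
  strict_lt : ∀ i j, i < j → j ≤ p → PolyLT (f i) (f j)
  deg_eq : ∀ i j, 1 ≤ i → i ≤ p → 1 ≤ j → j ≤ p → (f i).natDegree = (f j).natDegree
  r_strict_lt : ∀ i j, i < j → j ≤ p → rOf (f i) < rOf (f j)
  slope : ∀ i, 1 ≤ i → i + 1 ≤ p →
    PolyLT (C (rOf (f i) - rOf (f (i - 1))) * (f (i + 1) - f i))
           (C (rOf (f (i + 1)) - rOf (f i)) * (f i - f (i - 1)))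

/-- `z` belongs to the segment of `ℤ × ℚ[λ]` joining `x` and `y`: the first
coordinate of `z` is an integer and `z = t·x + (1−t)·y` for some rational
`0 ≤ t ≤ 1`. -/
def InSegment (x y z : ℚ × ℚ[X]) : Prop :=
  (∃ k : ℤ, z.1 = (k : ℚ)) ∧ ∃ t : ℚ, 0 ≤ t ∧ t ≤ 1 ∧
    z.1 = t * x.1 + (1 - t) * y.1 ∧ z.2 = t • x.2 + (1 - t) • y.2

/-- `z` belongs to the Harder–Narasimhan polygon of `(g 1, …, g q)`, i.e. to one of
the segments joining `x (i−1) = (r(g (i−1)), g (i−1))` and `x i = (r(g i), g i)`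
for `1 ≤ i ≤ q` (recall `g 0 = 0`, so `x 0 = (0, 0)`). -/
def InHNP (q : ℕ) (g : ℕ → ℚ[X]) (z : ℚ × ℚ[X]) : Prop :=
  ∃ i, 1 ≤ i ∧ i ≤ q ∧ InSegment (rOf (g (i - 1)), g (i - 1)) (rOf (g i), g i) z

/-- The point `w` lies under the point `z`: equal first coordinates, and
`w.2 ≤ z.2` in the eventual order on `ℚ[λ]`. -/
def LiesUnderPoint (w z : ℚ × ℚ[X]) : Prop := w.1 = z.1 ∧ PolyLE w.2 z.2

/-- The point `w` lies under the Harder–Narasimhan polygon of `(g 1, …, g q)`. -/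
def LiesUnderHNP (q : ℕ) (g : ℕ → ℚ[X]) (w : ℚ × ℚ[X]) : Prop :=
  ∃ z, InHNP q g z ∧ LiesUnderPoint w z

/-- The partial order on Harder–Narasimhan types: `(f 1, …, f p) ≤ (g 1, …, g q)` iff
for each `1 ≤ i ≤ p` the vertex `(r(f i), f i)` lies under the Harder–Narasimhan
polygon of `(g 1, …, g q)`. -/
def HNTle (p : ℕ) (f : ℕ → ℚ[X]) (q : ℕ) (g : ℕ → ℚ[X]) : Prop :=
  ∀ i, 1 ≤ i → i ≤ p → LiesUnderHNP q g (rOf (f i), f i)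

/-! ### Auxiliary lemmas -/

lemma polyLE_refl (f : ℚ[X]) : PolyLE f f := ⟨0, fun _ _ => le_rfl⟩

lemma diff_natDegree_coeff (f : ℚ[X]) (n : ℕ) (hn : f.natDegree = n + 1) :
    ((taylor 1 f) - f).natDegree = n ∧ ((taylor 1 f) - f).coeff n = (n + 1) * f.leadingCoeff := by
  have hf0 : f ≠ 0 := fun h => by simp [h] at hn
  have ha : f.leadingCoeff ≠ 0 := leadingCoeff_ne_zero.mpr hf0
  have htd : (taylor 1 f).natDegree = f.natDegree := natDegree_taylor f 1
  have hcoeff : ((taylor 1 f) - f).coeff n = (n + 1) * f.leadingCoeff := by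
    have h1 : (taylor 1 f).coeff n = (hasseDeriv n f).eval 1 := taylor_coeff (1:ℚ) f n
    have h2 : (hasseDeriv n f).natDegree < 2 := by
      have := natDegree_hasseDeriv_le f n
      omega
    have h3 : (hasseDeriv n f).eval 1 = (hasseDeriv n f).coeff 0 + (hasseDeriv n f).coeff 1 := by
      rw [eval_eq_sum_range' h2]
      simp [Finset.sum_range_succ]
    have h4 : (hasseDeriv n f).coeff 0 = f.coeff n := by
      rw [hasseDeriv_coeff]; simp
    have h5 : (hasseDeriv n f).coeff 1 = (n + 1 : ℚ) * f.coeff (n + 1) := by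
      rw [hasseDeriv_coeff]
      rw [show 1 + n = n + 1 by ring, Nat.choose_succ_self_right]
      push_cast; ring
    have h6 : f.coeff (n+1) = f.leadingCoeff := by rw [← hn]; rfl
    rw [coeff_sub, h1, h3, h4, h5, h6]; ring
  constructor
  · apply le_antisymm
    · rw [natDegree_le_iff_coeff_eq_zero]
      intro m hm
      rcases eq_or_lt_of_le (Nat.succ_le_of_lt hm) with h | h
      · rw [coeff_sub]
        have h1 : (taylor 1 f).coeff m = (hasseDeriv m f).eval 1 := taylor_coeff (1:ℚ) f m
        have h2 : (hasseDeriv m f).natDegree < 1 := by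
          have := natDegree_hasseDeriv_le f m
          omega
        have h3 : (hasseDeriv m f).eval 1 = (hasseDeriv m f).coeff 0 := by
          rw [eval_eq_sum_range' h2]; simp
        have h4 : (hasseDeriv m f).coeff 0 = f.coeff m := by
          rw [hasseDeriv_coeff]; simp
        rw [h1, h3, h4, sub_self]
      · rw [coeff_sub, coeff_eq_zero_of_natDegree_lt (by omega : (taylor 1 f).natDegree < m),
          coeff_eq_zero_of_natDegree_lt (by omega : f.natDegree < m), sub_self]
    · apply le_natDegree_of_ne_zero
      rw [hcoeff]
      positivity
  · exact hcoeff

lemma rOf_isInt (f : ℚ[X]) (hf : IsNumericalPoly f) : ∃ k : ℤ, rOf f = (k : ℚ) := by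
  suffices H : ∀ n (f : ℚ[X]), f.natDegree = n → IsNumericalPoly f → ∃ k : ℤ, rOf f = (k : ℚ) from
    H f.natDegree f rfl hf
  intro n
  induction n with
  | zero =>
    intro f hn hf
    obtain ⟨k, hk⟩ := hf 0
    refine ⟨k, ?_⟩
    rw [rOf, hn, Nat.factorial_zero, leadingCoeff, hn, coeff_zero_eq_eval_zero]
    simpa using hk
  | succ n ih =>
    intro f hn hf
    set D := (taylor 1 f) - f with hD
    obtain ⟨hDdeg, hDcoeff⟩ := diff_natDegree_coeff f n hn
    have hDnum : IsNumericalPoly D := by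
      intro m
      obtain ⟨k1, hk1⟩ := hf (m + 1)
      obtain ⟨k2, hk2⟩ := hf m
      refine ⟨k1 - k2, ?_⟩
      rw [hD, eval_sub, taylor_eval]
      push_cast at hk1 ⊢
      rw [hk2, ← hk1]
    obtain ⟨k, hk⟩ := ih D hDdeg hDnum
    refine ⟨k, ?_⟩
    have h1 : rOf ((taylor 1) f - f) = (n.factorial : ℚ) * ((n + 1) * f.leadingCoeff) := by
      rw [rOf, leadingCoeff, hDdeg, hDcoeff]
    have h2 : rOf f = rOf ((taylor 1) f - f) := by
      rw [h1, rOf, hn, Nat.factorial_succ]; push_cast; ring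
    rw [h2]; exact hk

/-- Value at `a` of the line through `(r (i-1), y (i-1))` and `(r i, y i)`. -/
def lineVal (r y : ℕ → ℚ) (i : ℕ) (a : ℚ) : ℚ :=
  y (i - 1) + (a - r (i - 1)) * ((y i - y (i - 1)) / (r i - r (i - 1)))

lemma lineVal_combo (r y : ℕ → ℚ) (i : ℕ) (hri : r (i - 1) < r i) (s : ℚ) :
    lineVal r y i (s * r (i - 1) + (1 - s) * r i) = s * y (i - 1) + (1 - s) * y i := by
  have hne : r i - r (i - 1) ≠ 0 := by linarith
  unfold lineVal
  field_simp
  ring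

lemma lineVal_affine (r y : ℕ → ℚ) (i : ℕ) (t b1 b2 : ℚ) :
    lineVal r y i (t * b1 + (1 - t) * b2)
      = t * lineVal r y i b1 + (1 - t) * lineVal r y i b2 := by
  unfold lineVal; ring

lemma lineVal_eq' (r y : ℕ → ℚ) (i : ℕ) (hri : r (i - 1) < r i) (a : ℚ) :
    lineVal r y i a = y i + (a - r i) * ((y i - y (i - 1)) / (r i - r (i - 1))) := by
  have hne : r i - r (i - 1) ≠ 0 := by linarith
  unfold lineVal
  field_simp
  ring

lemma lineVal_step (r y : ℕ → ℚ) (i : ℕ) (hi : 1 ≤ i)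
    (hr1 : r (i - 1) < r i) (hr2 : r i < r (i + 1))
    (hs : (r i - r (i - 1)) * (y (i + 1) - y i) ≤ (r (i + 1) - r i) * (y i - y (i - 1)))
    (a : ℚ) :
    (a ≤ r i → lineVal r y i a ≤ lineVal r y (i + 1) a) ∧
    (r i ≤ a → lineVal r y (i + 1) a ≤ lineVal r y i a) := by
  clear hi
  have hslope : (y (i + 1) - y i) / (r (i + 1) - r i)
      ≤ (y i - y (i - 1)) / (r i - r (i - 1)) := by
    rw [div_le_div_iff₀ (by linarith) (by linarith)]
    nlinarith [hs]
  have h1 : lineVal r y i a = y i + (a - r i) * ((y i - y (i - 1)) / (r i - r (i - 1))) :=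
    lineVal_eq' r y i hr1 a
  have h2 : lineVal r y (i + 1) a = y i + (a - r i) * ((y (i + 1) - y i) / (r (i + 1) - r i)) := by
    unfold lineVal
    simp [Nat.add_sub_cancel]
  constructor
  · intro ha
    rw [h1, h2]
    have := mul_le_mul_of_nonpos_left hslope (by linarith : a - r i ≤ 0)
    linarith
  · intro ha
    rw [h1, h2]
    have := mul_le_mul_of_nonneg_left hslope (by linarith : 0 ≤ a - r i)
    linarith

lemma seg_min (u : ℕ) (r y : ℕ → ℚ)
    (hr : ∀ i j, i < j → j ≤ u → r i < r j)
    (hs : ∀ i, 1 ≤ i → i + 1 ≤ u →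
      (r i - r (i - 1)) * (y (i + 1) - y i) ≤ (r (i + 1) - r i) * (y i - y (i - 1)))
    (e : ℕ) (he1 : 1 ≤ e) (heu : e ≤ u) (a : ℚ) (ha1 : r (e - 1) ≤ a) (ha2 : a ≤ r e)
    (i : ℕ) (hi1 : 1 ≤ i) (hiu : i ≤ u) :
    lineVal r y e a ≤ lineVal r y i a := by
  have hmono : ∀ k l, k ≤ l → l ≤ u → r k ≤ r l := by
    intro k l hkl hlu
    rcases eq_or_lt_of_le hkl with h | h
    · rw [h]
    · exact (hr k l h hlu).le
  rcases le_total e i with hei | hie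
  · have key : ∀ j, e + j ≤ u → lineVal r y e a ≤ lineVal r y (e + j) a := by
      intro j
      induction j with
      | zero => intro _; simp
      | succ n ih =>
        intro hju
        have h1 : lineVal r y e a ≤ lineVal r y (e + n) a := ih (by omega)
        have hstep := (lineVal_step r y (e + n) (by omega)
          (hr (e + n - 1) (e + n) (by omega) (by omega))
          (hr (e + n) (e + n + 1) (by omega) (by omega))
          (hs (e + n) (by omega) (by omega)) a).1
        have ha : a ≤ r (e + n) := ha2.trans (hmono e (e + n) (by omega) (by omega))
        have h2 := hstep ha
        calc lineVal r y e a ≤ lineVal r y (e + n) a := h1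
          _ ≤ lineVal r y (e + n + 1) a := h2
          _ = lineVal r y (e + (n + 1)) a := by ring_nf
    have := key (i - e) (by omega)
    rwa [show e + (i - e) = i by omega] at this
  · have key : ∀ j, j ≤ e - i → lineVal r y e a ≤ lineVal r y (e - j) a := by
      intro j
      induction j with
      | zero => intro _; simp
      | succ n ih =>
        intro hje
        have h1 : lineVal r y e a ≤ lineVal r y (e - n) a := ih (by omega)
        set k := e - n - 1 with hk
        have hk1 : 1 ≤ k := by omega
        have hstep := (lineVal_step r y k hk1
          (hr (k - 1) k (by omega) (by omega))
          (hr k (k + 1) (by omega) (by omega))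
          (hs k hk1 (by omega)) a).2
        have hra : r k ≤ a := le_trans (hmono k (e - 1) (by omega) (by omega)) ha1
        have h2 := hstep hra
        have hkk : k + 1 = e - n := by omega
        rw [hkk] at h2
        have hkk2 : e - (n + 1) = k := by omega
        rw [hkk2]
        exact h1.trans h2
    have := key (e - i) (by omega)
    rwa [show e - (e - i) = i by omega] at this

lemma find_seg (R : ℕ → ℚ) (a : ℚ) (h0 : R 0 ≤ a) :
    ∀ u, 1 ≤ u → a ≤ R u → ∃ e, 1 ≤ e ∧ e ≤ u ∧ R (e - 1) ≤ a ∧ a ≤ R e := by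
  intro u
  induction u with
  | zero => omega
  | succ n ih =>
    intro _ hau
    rcases Nat.eq_zero_or_pos n with h | h
    · subst h
      exact ⟨1, le_rfl, le_rfl, h0, hau⟩
    · rcases le_total a (R n) with hle | hle
      · obtain ⟨e, he1, he2, he3, he4⟩ := ih h hle
        exact ⟨e, he1, he2.trans (Nat.le_succ n), he3, he4⟩
      · exact ⟨n + 1, by omega, le_rfl, by simpa using hle, hau⟩

lemma exists_uniform_N (u : ℕ) (P : ℕ → ℤ → Prop)
    (h : ∀ k, k ≤ u → ∃ N : ℤ, ∀ m, N ≤ m → P k m) :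
    ∃ N : ℤ, ∀ k, k ≤ u → ∀ m, N ≤ m → P k m := by
  induction u with
  | zero =>
    obtain ⟨N, hN⟩ := h 0 le_rfl
    exact ⟨N, fun k hk m hm => by rw [Nat.le_zero.mp hk]; exact hN m hm⟩
  | succ n ih =>
    obtain ⟨N1, hN1⟩ := ih (fun k hk => h k (hk.trans (Nat.le_succ n)))
    obtain ⟨N2, hN2⟩ := h (n + 1) le_rfl
    refine ⟨max N1 N2, fun k hk m hm => ?_⟩
    rcases eq_or_lt_of_le hk with h' | h'
    · rw [h']; exact hN2 m (le_trans (le_max_right _ _) hm)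
    · exact hN1 k (by omega) m (le_trans (le_max_left _ _) hm)

lemma rOf_zero : rOf 0 = 0 := by simp [rOf]

lemma vertices_under (q u : ℕ) (g v : ℕ → ℚ[X]) (hσ : IsHNT q g) (hυ : IsHNT u v)
    (hgu : HNTle q g u v) : ∀ k, k ≤ q → LiesUnderHNP u v (rOf (g k), g k) := by
  intro k hk
  rcases Nat.eq_zero_or_pos k with h0 | h1
  · subst h0
    refine ⟨(0, 0), ⟨1, le_rfl, hυ.one_le, ⟨⟨0, by simp⟩, 1, by norm_num, le_rfl, ?_, ?_⟩⟩,
      ?_, ?_⟩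
    · simp [hυ.zero, rOf_zero]
    · simp [hυ.zero]
    · simp [hσ.zero, rOf_zero]
    · rw [hσ.zero]; exact polyLE_refl 0
  · exact hgu k h1 hk

set_option maxHeartbeats 1000000 in
/-- The relation `≤` on Harder–Narasimhan types is reflexive and transitive. -/
theorem hntLE_refl_trans
    (p : ℕ) (f : ℕ → ℚ[X]) (q : ℕ) (g : ℕ → ℚ[X]) (u : ℕ) (v : ℕ → ℚ[X])
    (hτ : IsHNT p f) (hσ : IsHNT q g) (hυ : IsHNT u v) :
    HNTle p f p f ∧ (HNTle p f q g → HNTle q g u v → HNTle p f u v) := by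
  constructor
  · -- reflexivity
    intro i hi1 hip
    obtain ⟨k, hk⟩ := rOf_isInt (f i) (hτ.numerical i hi1 hip)
    refine ⟨(rOf (f i), f i), ⟨i, hi1, hip, ⟨⟨k, hk⟩, 0, le_rfl, zero_le_one, by ring, by simp⟩⟩,
      rfl, polyLE_refl _⟩
  · -- transitivity
    intro hfg hgu i hi1 hip
    obtain ⟨z1, ⟨j, hj1, hjq, ⟨_, t, ht0, ht1, hz1a, hz1f⟩⟩, hz1eq, hz1le⟩ := hfg i hi1 hip
    obtain ⟨z2, ⟨c, hc1, hcu, ⟨_, s, hs0, hs1, hz2a, hz2f⟩⟩, hz2eq, hz2le⟩ :=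
      vertices_under q u g v hσ hυ hgu (j - 1) (le_trans (Nat.sub_le j 1) hjq)
    obtain ⟨z3, ⟨d, hd1, hdu, ⟨_, s', hs'0, hs'1, hz3a, hz3f⟩⟩, hz3eq, hz3le⟩ :=
      vertices_under q u g v hσ hυ hgu j hjq
    set R : ℕ → ℚ := fun k => rOf (v k) with hRdef
    have hRlt : ∀ i j, i < j → j ≤ u → R i < R j := hυ.r_strict_lt
    have hRmono : ∀ k l, k ≤ l → l ≤ u → R k ≤ R l := by
      intro k l hkl hlu
      rcases eq_or_lt_of_le hkl with h | h
      · rw [h]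
      · exact (hRlt k l h hlu).le
    have hR0 : R 0 = 0 := by simp [hRdef, hυ.zero, rOf_zero]
    have hRnonneg : ∀ k, k ≤ u → 0 ≤ R k := fun k hk => hR0 ▸ hRmono 0 k (Nat.zero_le k) hk
    set b1 := rOf (g (j - 1)) with hb1def
    set b2 := rOf (g j) with hb2def
    have hb1 : b1 = s * R (c - 1) + (1 - s) * R c := by
      have h := hz2a; rw [← hz2eq] at h; simpa using h
    have hb2 : b2 = s' * R (d - 1) + (1 - s') * R d := by
      have h := hz3a; rw [← hz3eq] at h; simpa using h
    have hRc : R (c - 1) < R c := hRlt (c - 1) c (by omega) hcu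
    have hRd : R (d - 1) < R d := hRlt (d - 1) d (by omega) hdu
    have hb1lo : R (c - 1) ≤ b1 := by nlinarith
    have hb1hi : b1 ≤ R c := by nlinarith
    have hb2lo : R (d - 1) ≤ b2 := by nlinarith
    have hb2hi : b2 ≤ R d := by nlinarith
    have hb10 : 0 ≤ b1 := le_trans (hRnonneg (c - 1) (by omega)) hb1lo
    have hb20 : 0 ≤ b2 := le_trans (hRnonneg (d - 1) (by omega)) hb2lo
    have hb1u : b1 ≤ R u := hb1hi.trans (hRmono c u hcu le_rfl)
    have hb2u : b2 ≤ R u := hb2hi.trans (hRmono d u hdu le_rfl)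
    set a := rOf (f i) with hadef
    have ha : a = t * b1 + (1 - t) * b2 := by
      have h := hz1a; rw [← hz1eq] at h; simpa using h
    have ha0 : 0 ≤ a := by
      rw [ha]
      have h1 := mul_nonneg ht0 hb10
      have h2 := mul_nonneg (by linarith : (0:ℚ) ≤ 1 - t) hb20
      linarith
    have hau : a ≤ R u := by
      rw [ha]
      have h1 := mul_le_mul_of_nonneg_left hb1u ht0
      have h2 := mul_le_mul_of_nonneg_left hb2u (by linarith : (0:ℚ) ≤ 1 - t)
      linarith
    obtain ⟨e, he1, heu, hae1, hae2⟩ := find_seg R a (hR0 ▸ ha0) u hυ.one_le hau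
    have hRe : R (e - 1) < R e := hRlt (e - 1) e (by omega) heu
    set t' := (R e - a) / (R e - R (e - 1)) with ht'def
    have ht'0 : 0 ≤ t' := div_nonneg (by linarith) (by linarith)
    have ht'1 : t' ≤ 1 := by
      rw [ht'def, div_le_one (by linarith)]; linarith
    have hne : R e - R (e - 1) ≠ 0 := by linarith
    have ha_eq : a = t' * R (e - 1) + (1 - t') * R e := by
      rw [ht'def]; field_simp; ring
    obtain ⟨k, hk⟩ := rOf_isInt (f i) (hτ.numerical i hi1 hip)
    refine ⟨(a, t' • v (e - 1) + (1 - t') • v e),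
      ⟨e, he1, heu, ⟨⟨k, hk⟩, t', ht'0, ht'1, ha_eq, rfl⟩⟩, ⟨rfl, ?_⟩⟩
    -- the eventual inequality
    obtain ⟨N0, hN0⟩ := exists_uniform_N u (fun k m => 1 ≤ k → k + 1 ≤ u →
        (R k - R (k - 1)) * ((v (k + 1)).eval (m : ℚ) - (v k).eval (m : ℚ)) ≤
        (R (k + 1) - R k) * ((v k).eval (m : ℚ) - (v (k - 1)).eval (m : ℚ))) (by
      intro k hk
      by_cases hcond : 1 ≤ k ∧ k + 1 ≤ u
      · obtain ⟨N, hN⟩ := (hυ.slope k hcond.1 hcond.2).1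
        refine ⟨N, fun m hm _ _ => ?_⟩
        have := hN m hm
        simpa [eval_mul, eval_sub, eval_C] using this
      · exact ⟨0, fun m _ h1' h2' => absurd ⟨h1', h2'⟩ hcond⟩)
    obtain ⟨N1, hN1⟩ := hz1le
    obtain ⟨N2, hN2⟩ := hz2le
    obtain ⟨N3, hN3⟩ := hz3le
    refine ⟨max (max N0 N1) (max N2 N3), fun m hm => ?_⟩
    set Y : ℕ → ℚ := fun k => (v k).eval (m : ℚ) with hYdef
    have hsl : ∀ k, 1 ≤ k → k + 1 ≤ u →
        (R k - R (k - 1)) * (Y (k + 1) - Y k) ≤ (R (k + 1) - R k) * (Y k - Y (k - 1)) :=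
      fun k h1 h2 => hN0 k (by omega) m (le_trans (le_trans (le_max_left _ _) (le_max_left _ _)) hm) h1 h2
    have e1 : (f i).eval (m : ℚ) ≤ z1.2.eval (m : ℚ) :=
      hN1 m (le_trans (le_trans (le_max_right _ _) (le_max_left _ _)) hm)
    have e2 : z1.2.eval (m : ℚ) = t * (g (j - 1)).eval (m : ℚ) + (1 - t) * (g j).eval (m : ℚ) := by
      rw [hz1f]; simp [eval_smul, smul_eq_mul]
    have e3 : (g (j - 1)).eval (m : ℚ) ≤ s * Y (c - 1) + (1 - s) * Y c := by
      have := hN2 m (le_trans (le_trans (le_max_left _ _) (le_max_right _ _)) hm)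
      rw [hz2f, eval_add, eval_smul, eval_smul, smul_eq_mul, smul_eq_mul] at this
      exact this
    have e4 : (g j).eval (m : ℚ) ≤ s' * Y (d - 1) + (1 - s') * Y d := by
      have := hN3 m (le_trans (le_trans (le_max_right _ _) (le_max_right _ _)) hm)
      rw [hz3f, eval_add, eval_smul, eval_smul, smul_eq_mul, smul_eq_mul] at this
      exact this
    have e5 : s * Y (c - 1) + (1 - s) * Y c = lineVal R Y c b1 := by
      rw [hb1]; exact (lineVal_combo R Y c hRc s).symm
    have e6 : s' * Y (d - 1) + (1 - s') * Y d = lineVal R Y d b2 := by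
      rw [hb2]; exact (lineVal_combo R Y d hRd s').symm
    have e7 : lineVal R Y c b1 ≤ lineVal R Y e b1 :=
      seg_min u R Y hRlt hsl c hc1 hcu b1 hb1lo hb1hi e he1 heu
    have e8 : lineVal R Y d b2 ≤ lineVal R Y e b2 :=
      seg_min u R Y hRlt hsl d hd1 hdu b2 hb2lo hb2hi e he1 heu
    have e9 : (t' • v (e - 1) + (1 - t') • v e).eval (m : ℚ) = lineVal R Y e a := by
      rw [eval_add, eval_smul, eval_smul, smul_eq_mul, smul_eq_mul]
      rw [show lineVal R Y e a = t' * Y (e - 1) + (1 - t') * Y e by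
        rw [ha_eq]; exact lineVal_combo R Y e hRe t']
    have e10 : lineVal R Y e a = t * lineVal R Y e b1 + (1 - t) * lineVal R Y e b2 := by
      rw [ha]; exact lineVal_affine R Y e t b1 b2
    have h3 : t * (g (j - 1)).eval (m : ℚ) + (1 - t) * (g j).eval (m : ℚ)
        ≤ t * lineVal R Y e b1 + (1 - t) * lineVal R Y e b2 := by
      have l1 : (g (j - 1)).eval (m : ℚ) ≤ lineVal R Y e b1 := e3.trans (e5.le.trans e7)
      have l2 : (g j).eval (m : ℚ) ≤ lineVal R Y e b2 := e4.trans (e6.le.trans e8)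
      have := mul_le_mul_of_nonneg_left l1 ht0
      have := mul_le_mul_of_nonneg_left l2 (by linarith : (0:ℚ) ≤ 1 - t)
      linarith
    show (f i).eval (m : ℚ) ≤ (t' • v (e - 1) + (1 - t') • v e).eval (m : ℚ)
    calc (f i).eval (m : ℚ) ≤ z1.2.eval (m : ℚ) := e1
      _ = t * (g (j - 1)).eval (m : ℚ) + (1 - t) * (g j).eval (m : ℚ) := e2
      _ ≤ t * lineVal R Y e b1 + (1 - t) * lineVal R Y e b2 := h3
      _ = lineVal R Y e a := e10.symm
      _ = (t' • v (e - 1) + (1 - t') • v e).eval (m : ℚ) := e9.symm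
end

section
/- The relation ≤ on HNT, defined by τ ≤ σ if every vertex of the Harder-Narasimhan polygon of τ lies under the Harder-Narasimhan polygon of σ, is antisymmetric: if τ = (f_1, …, f_p) and σ = (g_1, …, g_q) are elements of HNT with τ ≤ σ and σ ≤ τ, then p = q and f_i = g_i for all 1 ≤ i ≤ p. -/
open Polynomial

/-! ### Auxiliary lemmas -/

lemma evpos {f : ℚ[X]} (h : 0 < f.leadingCoeff) :
    ∃ N : ℤ, ∀ m : ℤ, N ≤ m → 0 < f.eval (m:ℚ) := by
  by_cases hd : 0 < f.degree
  · have h1 := (Polynomial.tendsto_atTop_of_leadingCoeff_nonneg f hd h.le).eventually_gt_atTop 0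
    have h2 : Filter.Tendsto (fun m : ℤ => (m:ℚ)) Filter.atTop Filter.atTop :=
      tendsto_intCast_atTop_atTop
    rcases Filter.eventually_atTop.1 (h2.eventually h1) with ⟨N, hN⟩
    exact ⟨N, hN⟩
  · have hf0 : f ≠ 0 := fun h0 => by simp [h0] at h
    have hnd : f.natDegree = 0 :=
      Polynomial.natDegree_eq_zero_iff_degree_le_zero.2 (not_lt.1 hd)
    rcases Polynomial.natDegree_eq_zero.1 hnd with ⟨c, rfl⟩
    refine ⟨0, fun m _ => ?_⟩
    simpa using by simpa [Polynomial.leadingCoeff_C] using h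

lemma polyLT_eventually {f g : ℚ[X]} (h : PolyLT f g) :
    ∃ N : ℤ, ∀ m : ℤ, N ≤ m → f.eval (m:ℚ) < g.eval (m:ℚ) := by
  obtain ⟨⟨N, hN⟩, hne⟩ := h
  have hsub : g - f ≠ 0 := sub_ne_zero.2 (Ne.symm hne)
  have hlc : 0 < (g - f).leadingCoeff := by
    rcases lt_trichotomy ((g - f).leadingCoeff) 0 with hneg | h0 | hpos
    · exfalso
      have hpos' : 0 < (f - g).leadingCoeff := by
        rw [show f - g = -(g - f) by ring, Polynomial.leadingCoeff_neg]; linarith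
      obtain ⟨M, hM⟩ := evpos hpos'
      have a1 := hM (max N M) (le_max_right _ _)
      have a2 := hN (max N M) (le_max_left _ _)
      rw [Polynomial.eval_sub] at a1; linarith
    · exact absurd (Polynomial.leadingCoeff_eq_zero.1 h0) hsub
    · exact hpos
  obtain ⟨M, hM⟩ := evpos hlc
  refine ⟨M, fun m hm => ?_⟩
  have := hM m hm
  rw [Polynomial.eval_sub] at this; linarith

lemma poly_eq_of_eventually_eq {f g : ℚ[X]} {N : ℤ}
    (h : ∀ m : ℤ, N ≤ m → f.eval (m:ℚ) = g.eval (m:ℚ)) : f = g := by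
  have hz : f - g = 0 := by
    apply Polynomial.eq_zero_of_infinite_isRoot
    apply Set.Infinite.mono (s := (fun n : ℤ => (n:ℚ)) '' Set.Ici N)
    · rintro x ⟨n, hn, rfl⟩
      simp only [Set.mem_setOf_eq, Polynomial.IsRoot, Polynomial.eval_sub]
      rw [h n hn]; ring
    · exact (Set.Ici_infinite N).image (fun a _ b _ hab => by exact_mod_cast hab)
  have := sub_eq_zero.1 hz
  exact this

lemma r_mono {p : ℕ} {f : ℕ → ℚ[X]} (h : IsHNT p f) {i j : ℕ} (hij : i ≤ j) (hj : j ≤ p) :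
    rOf (f i) ≤ rOf (f j) := by
  rcases eq_or_lt_of_le hij with rfl | h'
  · exact le_refl _
  · exact (h.r_strict_lt _ _ h' hj).le

/-- Cross-multiplied transitivity chain for slopes: slope of segment `k` exceeds
slope of segment `e` for `k < e`. -/
lemma slope_chain {p : ℕ} {f : ℕ → ℚ[X]} (h : IsHNT p f) :
    ∀ e k, 1 ≤ k → k < e → e ≤ p →
    ∃ N : ℤ, ∀ m : ℤ, N ≤ m →
      (rOf (f k) - rOf (f (k-1))) * ((f e).eval (m:ℚ) - (f (e-1)).eval (m:ℚ))
        < (rOf (f e) - rOf (f (e-1))) * ((f k).eval (m:ℚ) - (f (k-1)).eval (m:ℚ)) := by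
  intro e
  induction e with
  | zero => intro k _ hke _; omega
  | succ e ih =>
    intro k hk1 hke hep
    rcases Nat.lt_or_ge k e with hlt | hge
    · have he1 : 1 ≤ e := by omega
      obtain ⟨N1, h1⟩ := ih k hk1 hlt (by omega)
      obtain ⟨N2, h2⟩ := polyLT_eventually (h.slope e he1 hep)
      refine ⟨max N1 N2, fun m hm => ?_⟩
      have a1 := h1 m (le_trans (le_max_left _ _) hm)
      have a2 := h2 m (le_trans (le_max_right _ _) hm)
      simp only [Polynomial.eval_mul, Polynomial.eval_sub, Polynomial.eval_C] at a2
      have hck : 0 < rOf (f k) - rOf (f (k-1)) :=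
        sub_pos.2 (h.r_strict_lt _ _ (by omega) (by omega))
      have hce : 0 < rOf (f e) - rOf (f (e-1)) :=
        sub_pos.2 (h.r_strict_lt _ _ (by omega) (by omega))
      have hce1 : 0 < rOf (f (e+1)) - rOf (f e) :=
        sub_pos.2 (h.r_strict_lt _ _ (by omega) hep)
      simp only [Nat.add_sub_cancel]
      have key : (rOf (f e) - rOf (f (e-1))) *
          ((rOf (f k) - rOf (f (k-1))) * ((f (e+1)).eval (m:ℚ) - (f e).eval (m:ℚ)))
          < (rOf (f e) - rOf (f (e-1))) *
          ((rOf (f (e+1)) - rOf (f e)) * ((f k).eval (m:ℚ) - (f (k-1)).eval (m:ℚ))) := by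
        nlinarith [mul_lt_mul_of_pos_left a2 hck, mul_lt_mul_of_pos_left a1 hce1]
      exact lt_of_mul_lt_mul_left key hce.le
    · have hke' : k = e := by omega
      subst hke'
      obtain ⟨N, hN⟩ := polyLT_eventually (h.slope k hk1 hep)
      refine ⟨N, fun m hm => ?_⟩
      have := hN m hm
      simp only [Polynomial.eval_mul, Polynomial.eval_sub, Polynomial.eval_C] at this
      simpa only [Nat.add_sub_cancel] using this

/-- Concavity: every vertex `k ≤ e` lies under the line through vertices `e-1` and `e`,
strictly when `k + 1 < e`. -/
lemma vertex_bound {p : ℕ} {f : ℕ → ℚ[X]} (h : IsHNT p f) (e : ℕ) (he1 : 1 ≤ e) (hep : e ≤ p) :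
    ∀ n k, k + n = e →
    ∃ N : ℤ, ∀ m : ℤ, N ≤ m →
      ((rOf (f e) - rOf (f (e-1))) * ((f k).eval (m:ℚ))
        ≤ (rOf (f e) - rOf (f (e-1))) * ((f e).eval (m:ℚ))
          + (rOf (f k) - rOf (f e)) * ((f e).eval (m:ℚ) - (f (e-1)).eval (m:ℚ)))
      ∧ (k + 1 < e →
        (rOf (f e) - rOf (f (e-1))) * ((f k).eval (m:ℚ))
          < (rOf (f e) - rOf (f (e-1))) * ((f e).eval (m:ℚ))
            + (rOf (f k) - rOf (f e)) * ((f e).eval (m:ℚ) - (f (e-1)).eval (m:ℚ))) := by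
  intro n
  induction n with
  | zero =>
    intro k hk
    have : k = e := by omega
    subst this
    exact ⟨0, fun m _ => ⟨le_of_eq (by ring), fun hc => absurd hc (by omega)⟩⟩
  | succ n ih =>
    intro k hk
    obtain ⟨N1, h1⟩ := ih (k+1) (by omega)
    by_cases hlt : k + 1 < e
    · obtain ⟨N2, h2⟩ := slope_chain h e (k+1) (by omega) hlt hep
      refine ⟨max N1 N2, fun m hm => ?_⟩
      obtain ⟨w1, _⟩ := h1 m (le_trans (le_max_left _ _) hm)
      have s2 := h2 m (le_trans (le_max_right _ _) hm)
      simp only [Nat.add_sub_cancel] at s2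
      constructor
      · nlinarith [w1, s2]
      · intro _; nlinarith [w1, s2]
    · have hke : k + 1 = e := by omega
      have hk' : k = e - 1 := by omega
      subst hk'
      refine ⟨0, fun m _ => ?_⟩
      constructor
      · exact le_of_eq (by ring)
      · intro hc; omega

/-- Any point of the HN polygon with abscissa `≤ r (g e)` lies under the line through
vertices `e-1` and `e`, strictly if its abscissa is `< r (g (e-1))`. -/
lemma point_bound {q : ℕ} {g : ℕ → ℚ[X]} (hσ : IsHNT q g) (e : ℕ) (he1 : 1 ≤ e) (heq : e ≤ q)
    (z : ℚ × ℚ[X]) (hz : InHNP q g z) (hle : z.1 ≤ rOf (g e)) :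
    ∃ N : ℤ, ∀ m : ℤ, N ≤ m →
      ((rOf (g e) - rOf (g (e-1))) * (z.2.eval (m:ℚ))
        ≤ (rOf (g e) - rOf (g (e-1))) * ((g e).eval (m:ℚ))
          + (z.1 - rOf (g e)) * ((g e).eval (m:ℚ) - (g (e-1)).eval (m:ℚ)))
      ∧ (z.1 < rOf (g (e-1)) →
        (rOf (g e) - rOf (g (e-1))) * (z.2.eval (m:ℚ))
          < (rOf (g e) - rOf (g (e-1))) * ((g e).eval (m:ℚ))
            + (z.1 - rOf (g e)) * ((g e).eval (m:ℚ) - (g (e-1)).eval (m:ℚ))) := by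
  obtain ⟨k, hk1, hkq, ⟨_, t, ht0, ht1, hx, hy⟩⟩ := hz
  dsimp only at hx hy
  have hrkk : rOf (g (k-1)) < rOf (g k) := hσ.r_strict_lt _ _ (by omega) hkq
  have hz1ge : rOf (g (k-1)) ≤ z.1 := by nlinarith [hx, mul_le_mul_of_nonneg_left hrkk.le (by linarith : (0:ℚ) ≤ 1 - t)]
  have hz1le : z.1 ≤ rOf (g k) := by nlinarith [hx, mul_le_mul_of_nonneg_left hrkk.le ht0]
  have hzev : ∀ m : ℤ, z.2.eval (m:ℚ) = t * (g (k-1)).eval (m:ℚ) + (1-t) * (g k).eval (m:ℚ) := by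
    intro m; rw [hy]; simp [smul_eq_mul]
  have hk1e : k - 1 ≤ e := by
    by_contra hc
    push_neg at hc
    have := hσ.r_strict_lt e (k-1) hc (by omega)
    linarith
  by_cases hke : k ≤ e
  · obtain ⟨N1, h1⟩ := vertex_bound hσ e he1 heq (e - k) k (by omega)
    obtain ⟨N2, h2⟩ := vertex_bound hσ e he1 heq (e - (k-1)) (k-1) (by omega)
    refine ⟨max N1 N2, fun m hm => ?_⟩
    obtain ⟨w1, s1⟩ := h1 m (le_trans (le_max_left _ _) hm)
    obtain ⟨w2, s2⟩ := h2 m (le_trans (le_max_right _ _) hm)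
    have hev := hzev m
    constructor
    · rw [hev, hx]
      nlinarith [mul_le_mul_of_nonneg_left w1 (by linarith : (0:ℚ) ≤ 1 - t),
        mul_le_mul_of_nonneg_left w2 ht0]
    · intro hstrict
      have hk1e1 : k - 1 < e - 1 := by
        by_contra hc
        push_neg at hc
        have : rOf (g (e-1)) ≤ rOf (g (k-1)) := r_mono hσ hc (by omega)
        linarith
      have hs2 : (k-1) + 1 < e := by omega
      have s2' := s2 hs2
      rcases eq_or_lt_of_le ht0 with ht0' | htpos
      · -- t = 0
        have ht : t = 0 := ht0'.symm
        subst ht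
        have hxk : z.1 = rOf (g k) := by rw [hx]; ring
        have hke1 : k + 1 < e := by
          by_contra hc
          push_neg at hc
          have hke' : k = e - 1 := by omega
          rw [hke'] at hxk
          linarith
        have s1' := s1 hke1
        rw [hev, hxk]
        nlinarith [s1']
      · rw [hev, hx]
        nlinarith [mul_lt_mul_of_pos_left s2' htpos,
          mul_le_mul_of_nonneg_left w1 (by linarith : (0:ℚ) ≤ 1 - t)]
  · -- k = e + 1
    have hke1 : k = e + 1 := by omega
    subst hke1
    simp only [Nat.add_sub_cancel] at hrkk hz1ge hzev hx hy ⊢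
    have hz1 : z.1 = rOf (g e) := le_antisymm hle hz1ge
    have ht : t = 1 := by
      have h0 : (1 - t) * (rOf (g (e+1)) - rOf (g e)) = 0 := by nlinarith [hx, hz1]
      rcases mul_eq_zero.1 h0 with h' | h'
      · linarith
      · linarith
    subst ht
    refine ⟨0, fun m _ => ?_⟩
    have hev : z.2.eval (m:ℚ) = (g e).eval (m:ℚ) := by
      rw [hzev m]; ring
    constructor
    · rw [hev, hz1]; exact le_of_eq (by ring)
    · intro hc
      have : rOf (g (e-1)) < rOf (g e) := hσ.r_strict_lt _ _ (by omega) (by omega)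
      rw [hz1] at hc; linarith

lemma under_all {p : ℕ} {f : ℕ → ℚ[X]} {q : ℕ} {g : ℕ → ℚ[X]}
    (hτ : IsHNT p f) (hσ : IsHNT q g) (h1 : HNTle p f q g) :
    ∀ i, i ≤ p → LiesUnderHNP q g (rOf (f i), f i) := by
  intro i hip
  rcases Nat.eq_zero_or_pos i with rfl | hi
  · refine ⟨(0, 0), ⟨1, le_refl 1, hσ.one_le, ⟨⟨0, by norm_num⟩, 1, by norm_num, by norm_num,
      ?_, ?_⟩⟩, ?_, ?_⟩
    · show (0:ℚ) = 1 * rOf (g (1-1)) + (1-1) * rOf (g 1)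
      simp [hσ.zero, rOf_zero]
    · show (0:ℚ[X]) = (1:ℚ) • g (1-1) + ((1:ℚ)-1) • g 1
      simp [hσ.zero]
    · show rOf (f 0) = (0:ℚ)
      rw [hτ.zero, rOf_zero]
    · show PolyLE (f 0) 0
      rw [hτ.zero]
      exact ⟨0, fun m _ => le_refl _⟩
  · exact h1 i hi hip

lemma InHNP_fst_le {q : ℕ} {g : ℕ → ℚ[X]} (hσ : IsHNT q g) {z : ℚ × ℚ[X]}
    (hz : InHNP q g z) : z.1 ≤ rOf (g q) := by
  obtain ⟨k, hk1, hkq, ⟨_, t, ht0, ht1, hx, _⟩⟩ := hz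
  dsimp only at hx
  have h1 : rOf (g (k-1)) ≤ rOf (g k) := r_mono hσ (by omega) hkq
  have h2 : rOf (g k) ≤ rOf (g q) := r_mono hσ hkq (le_refl _)
  nlinarith [mul_le_mul_of_nonneg_left h1 ht0]

lemma top_eq {p : ℕ} {f : ℕ → ℚ[X]} {q : ℕ} {g : ℕ → ℚ[X]}
    (hτ : IsHNT p f) (hσ : IsHNT q g) (h1 : HNTle p f q g) (h2 : HNTle q g p f) :
    rOf (f p) = rOf (g q) ∧ f p = g q := by
  obtain ⟨z1, hz1in, hz1eq, hz1le⟩ := h1 p hτ.one_le (le_refl _)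
  obtain ⟨z2, hz2in, hz2eq, hz2le⟩ := h2 q hσ.one_le (le_refl _)
  have hv1 : rOf (f p) = z1.1 := hz1eq
  have hv2 : rOf (g q) = z2.1 := hz2eq
  have hr1 : rOf (f p) ≤ rOf (g q) := by rw [hv1]; exact InHNP_fst_le hσ hz1in
  have hr2 : rOf (g q) ≤ rOf (f p) := by rw [hv2]; exact InHNP_fst_le hτ hz2in
  have hreq : rOf (f p) = rOf (g q) := le_antisymm hr1 hr2
  -- show the witness point is the top vertex
  have key : ∀ (q' : ℕ) (g' : ℕ → ℚ[X]) (hσ' : IsHNT q' g') (z : ℚ × ℚ[X]),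
      InHNP q' g' z → z.1 = rOf (g' q') → z.2 = g' q' := by
    intro q' g' hσ' z hz hz1
    obtain ⟨k, hk1, hkq, ⟨_, t, ht0, ht1, hx, hy⟩⟩ := hz
    dsimp only at hx hy
    have hrkk : rOf (g' (k-1)) < rOf (g' k) := hσ'.r_strict_lt _ _ (by omega) hkq
    have hzk : z.1 ≤ rOf (g' k) := by nlinarith [hx, mul_le_mul_of_nonneg_left hrkk.le ht0]
    have hkq' : k = q' := by
      by_contra hc
      have : rOf (g' k) < rOf (g' q') := hσ'.r_strict_lt _ _ (by omega) (le_refl _)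
      rw [hz1] at hzk; linarith
    subst hkq'
    have ht : t = 0 := by
      have h0 : t * (rOf (g' k) - rOf (g' (k-1))) = 0 := by nlinarith [hx, hz1]
      rcases mul_eq_zero.1 h0 with h' | h'
      · exact h'
      · linarith
    subst ht
    rw [hy]; simp
  have e1 : z1.2 = g q := key q g hσ z1 hz1in (by rw [← hv1, hreq])
  have e2 : z2.2 = f p := key p f hτ z2 hz2in (by rw [← hv2, hreq])
  rw [e1] at hz1le
  rw [e2] at hz2le
  obtain ⟨N1, hN1⟩ := hz1le
  obtain ⟨N2, hN2⟩ := hz2le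
  refine ⟨hreq, poly_eq_of_eventually_eq (N := max N1 N2) fun m hm => ?_⟩
  exact le_antisymm (hN1 m (le_trans (le_max_left _ _) hm)) (hN2 m (le_trans (le_max_right _ _) hm))

lemma step_lemma {p : ℕ} {f : ℕ → ℚ[X]} {q : ℕ} {g : ℕ → ℚ[X]}
    (hτ : IsHNT p f) (hσ : IsHNT q g) (h1 : HNTle p f q g) (h2 : HNTle q g p f)
    (i j : ℕ) (hip : i + 1 ≤ p) (hjq : j + 1 ≤ q)
    (hrt : rOf (f (i+1)) = rOf (g (j+1))) (hft : f (i+1) = g (j+1)) :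
    rOf (f i) = rOf (g j) ∧ f i = g j := by
  obtain ⟨z1, hz1in, hz1eq, hz1le⟩ := under_all hτ hσ h1 i (by omega)
  obtain ⟨z2, hz2in, hz2eq, hz2le⟩ := under_all hσ hτ h2 j (by omega)
  have hz1v : rOf (f i) = z1.1 := hz1eq
  have hz2v : rOf (g j) = z2.1 := hz2eq
  have hri : rOf (f i) < rOf (f (i+1)) := hτ.r_strict_lt i (i+1) (by omega) hip
  have hsj : rOf (g j) < rOf (g (j+1)) := hσ.r_strict_lt j (j+1) (by omega) hjq
  obtain ⟨N1, H1⟩ := point_bound hσ (j+1) (by omega) hjq z1 hz1in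
    (by rw [← hz1v]; linarith [hrt ▸ hri])
  obtain ⟨N2, H2⟩ := point_bound hτ (i+1) (by omega) hip z2 hz2in
    (by rw [← hz2v, hrt]; linarith)
  obtain ⟨N3, H3⟩ := hz1le
  obtain ⟨N4, H4⟩ := hz2le
  simp only [Nat.add_sub_cancel] at H1 H2
  rw [hft] at H2
  dsimp only at H3 H4
  set N := max (max N1 N2) (max N3 N4) with hN
  have hm1 : N1 ≤ N := le_trans (le_max_left _ _) (le_max_left _ _)
  have hm2 : N2 ≤ N := le_trans (le_max_right _ _) (le_max_left _ _)
  have hm3 : N3 ≤ N := le_trans (le_max_left _ _) (le_max_right _ _)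
  have hm4 : N4 ≤ N := le_trans (le_max_right _ _) (le_max_right _ _)
  have hA : 0 < rOf (g (j+1)) - rOf (f i) := by rw [← hrt]; linarith
  have hB : 0 < rOf (g (j+1)) - rOf (g j) := by linarith
  have hreq : rOf (f i) = rOf (g j) := by
    rcases lt_trichotomy (rOf (f i)) (rOf (g j)) with hlt | heq | hgt
    · exfalso
      have st1 := (H1 N hm1).2 (by rw [← hz1v]; exact hlt)
      have w2 := (H2 N hm2).1
      have e3 := H3 N hm3
      have e4 := H4 N hm4
      rw [← hz1v] at st1
      rw [← hz2v] at w2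
      nlinarith [mul_le_mul_of_nonneg_left e3 hB.le, mul_le_mul_of_nonneg_left e4 hA.le,
        st1, w2]
    · exact heq
    · exfalso
      have w1 := (H1 N hm1).1
      have st2 := (H2 N hm2).2 (by rw [← hz2v]; exact hgt)
      have e3 := H3 N hm3
      have e4 := H4 N hm4
      rw [← hz1v] at w1
      rw [← hz2v] at st2
      nlinarith [mul_le_mul_of_nonneg_left e3 hB.le, mul_le_mul_of_nonneg_left e4 hA.le,
        st2, w1]
  refine ⟨hreq, poly_eq_of_eventually_eq (N := N) fun m hm => ?_⟩
  have w1 := (H1 m (le_trans hm1 hm)).1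
  have w2 := (H2 m (le_trans hm2 hm)).1
  have e3 := H3 m (le_trans hm3 hm)
  have e4 := H4 m (le_trans hm4 hm)
  rw [← hz1v] at w1
  rw [← hz2v] at w2
  rw [hreq] at w1 w2
  have t1 : (rOf (g (j+1)) - rOf (g j)) * ((f i).eval (m:ℚ))
      ≤ (rOf (g (j+1)) - rOf (g j)) * ((g j).eval (m:ℚ)) := by
    nlinarith [mul_le_mul_of_nonneg_left e3 hB.le, w1]
  have t2 : (rOf (g (j+1)) - rOf (g j)) * ((g j).eval (m:ℚ))
      ≤ (rOf (g (j+1)) - rOf (g j)) * ((f i).eval (m:ℚ)) := by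
    nlinarith [mul_le_mul_of_nonneg_left e4 hB.le, w2]
  exact le_antisymm (le_of_mul_le_mul_left t1 hB) (le_of_mul_le_mul_left t2 hB)

/-- The relation `≤` on Harder–Narasimhan types is antisymmetric: if `τ ≤ σ` and
`σ ≤ τ` then the two types have the same length and the same entries. -/
theorem hntLE_antisymm
    (p : ℕ) (f : ℕ → ℚ[X]) (q : ℕ) (g : ℕ → ℚ[X])
    (hτ : IsHNT p f) (hσ : IsHNT q g)
    (h1 : HNTle p f q g) (h2 : HNTle q g p f) :
    p = q ∧ ∀ i, 1 ≤ i → i ≤ p → f i = g i := by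
  have key : ∀ k, k ≤ p → k ≤ q → rOf (f (p - k)) = rOf (g (q - k)) ∧ f (p - k) = g (q - k) := by
    intro k
    induction k with
    | zero =>
      intro _ _
      simpa using top_eq hτ hσ h1 h2
    | succ k ih =>
      intro hkp hkq
      obtain ⟨hr, hf⟩ := ih (by omega) (by omega)
      have e1 : p - k = (p - (k+1)) + 1 := by omega
      have e2 : q - k = (q - (k+1)) + 1 := by omega
      rw [e1, e2] at hr hf
      exact step_lemma hτ hσ h1 h2 (p - (k+1)) (q - (k+1)) (by omega) (by omega) hr hf
  have hpq : p = q := by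
    by_contra hne
    rcases Nat.lt_or_ge p q with hlt | hge
    · obtain ⟨hr, _⟩ := key p (le_refl _) (by omega)
      rw [Nat.sub_self, hτ.zero, rOf_zero] at hr
      have hpos : 0 < rOf (g (q - p)) := by
        have h0 : rOf (g 0) = 0 := by rw [hσ.zero, rOf_zero]
        have := hσ.r_strict_lt 0 (q - p) (by omega) (by omega)
        rw [h0] at this; exact this
      linarith
    · have hqp : q < p := by omega
      obtain ⟨hr, _⟩ := key q (by omega) (le_refl _)
      rw [Nat.sub_self, hσ.zero, rOf_zero] at hr
      have hpos : 0 < rOf (f (p - q)) := by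
        have h0 : rOf (f 0) = 0 := by rw [hτ.zero, rOf_zero]
        have := hτ.r_strict_lt 0 (p - q) (by omega) (by omega)
        rw [h0] at this; exact this
      linarith
  refine ⟨hpq, fun i h1i hip => ?_⟩
  obtain ⟨_, hf⟩ := key (p - i) (by omega) (by omega)
  have e1 : p - (p - i) = i := by omega
  have e2 : q - (p - i) = i := by omega
  rw [e1, e2] at hf
  exact hf
end
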